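/- Let U = ℂ[a,b,c] and let Δ : U → V := U ⊗_ℂ U be the ℂ-algebra homomorphism with Δ(a) = a⊗a, Δ(b) = a⊗b + b⊗c, Δ(c) = c⊗c. Regard V as a U-module by restriction of scalars along Δ. Then V is not flat as a U-module; in particular, V is not projective as a U-module. -/

import Mathlib

set_option synthInstance.maxHeartbeats 1000000
set_option maxHeartbeats 1000000

open TensorProduct MvPolynomial

noncomputable abbrev UU : Type := MvPolynomial (Fin 3) ℂ

noncomputable def Δ : UU →ₐ[ℂ] UU ⊗[ℂ] UU :=
  MvPolynomial.aeval
    ![(X 0 : UU) ⊗ₜ[ℂ] (X 0 : UU),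
      (X 0 : UU) ⊗ₜ[ℂ] (X 1 : UU) + (X 1 : UU) ⊗ₜ[ℂ] (X 2 : UU),
      (X 2 : UU) ⊗ₜ[ℂ] (X 2 : UU)]

noncomputable abbrev VV : Type := UU ⊗[ℂ] UU

/-- evaluation at 0 -/
noncomputable def eps : UU →ₐ[ℂ] ℂ := aeval (fun _ => 0)

@[simp] lemma eps_X (i : Fin 3) : eps (X i) = 0 := by simp [eps]

/-- `eps ∘ pderiv j` : picks the coefficient of the degree-one monomial `X j`. -/
noncomputable def lamd (j : Fin 3) : UU →ₗ[ℂ] ℂ :=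
  eps.toLinearMap.comp (pderiv j).toLinearMap

@[simp] lemma lamd_X (j i : Fin 3) : lamd j (X i) = if i = j then 1 else 0 := by
  rcases eq_or_ne i j with h | h <;> simp [lamd, h]

lemma lamd_X_mul {j i : Fin 3} (h : i ≠ j) (p : UU) : lamd j (X i * p) = 0 := by
  simp [lamd, pderiv_mul, pderiv_X_of_ne h, map_add, map_mul]

/-- the coefficient of `X 1 ⊗ X 0` -/
noncomputable def mu : VV →ₗ[ℂ] ℂ :=
  TensorProduct.lift ((LinearMap.mul ℂ ℂ).compl₁₂ (lamd 1) (lamd 0))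

@[simp] lemma mu_tmul (p q : UU) : mu (p ⊗ₜ[ℂ] q) = lamd 1 p * lamd 0 q := rfl

lemma mu_delta_X_mul (i : Fin 3) (v : VV) : mu (Δ (X i) * v) = 0 := by
  induction v using TensorProduct.induction_on with
  | zero => simp
  | tmul p q =>
      fin_cases i <;>
        simp [Δ, Algebra.TensorProduct.tmul_mul_tmul, add_mul, mul_add,
          lamd_X_mul (show (0:Fin 3) ≠ 1 by decide),
          lamd_X_mul (show (2:Fin 3) ≠ 0 by decide),
          lamd_X_mul (show (2:Fin 3) ≠ 1 by decide)]
  | add x y hx hy => rw [mul_add, map_add, hx, hy, add_zero]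

lemma mu_delta_mul (u : UU) (v : VV) : mu (Δ u * v) = eps u * mu v := by
  induction u using MvPolynomial.induction_on generalizing v with
  | C r => rw [show Δ (C r) = algebraMap ℂ VV r from Δ.commutes r,
      ← Algebra.smul_def, map_smul, show eps (C r) = r from eps.commutes r, smul_eq_mul]
  | add p q hp hq => rw [map_add, add_mul, map_add, hp, hq, map_add, add_mul]
  | mul_X p i hp =>
      rw [show Δ (p * X i) = Δ p * Δ (X i) from map_mul _ _ _, mul_assoc, hp, mu_delta_X_mul,
        show eps (p * X i) = eps p * eps (X i) from map_mul _ _ _, eps_X]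
      ring

lemma eps_mem {x : UU} (hx : x ∈ Ideal.span {(X 0 : UU), X 1, X 2}) : eps x = 0 := by
  refine (Ideal.span_le (I := RingHom.ker eps.toRingHom)).mpr ?_ hx
  rintro y (rfl | rfl | rfl) <;> simp [RingHom.mem_ker]

lemma lam_mul (u : UU) {x : UU} (hx : x ∈ Ideal.span {(X 0 : UU), X 1, X 2}) :
    lamd 2 (u * x) = eps u * lamd 2 x := by
  simp [lamd, pderiv_mul, map_add, map_mul, eps_mem hx]

@[simp] lemma Δ_X0 : Δ (X 0) = (X 0 : UU) ⊗ₜ[ℂ] (X 0 : UU) := by simp [Δ]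
@[simp] lemma Δ_X1 :
    Δ (X 1) = (X 0 : UU) ⊗ₜ[ℂ] (X 1 : UU) + (X 1 : UU) ⊗ₜ[ℂ] (X 2 : UU) := by simp [Δ]
@[simp] lemma Δ_X2 : Δ (X 2) = (X 2 : UU) ⊗ₜ[ℂ] (X 2 : UU) := by simp [Δ]

noncomputable def restrictModule : Module UU (UU ⊗[ℂ] UU) :=
  Module.compHom _ Δ.toRingHom

/-- Type synonym for `VV` carrying the restricted module structure. -/
noncomputable def W : Type := VV

noncomputable instance : AddCommGroup W := inferInstanceAs (AddCommGroup VV)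

noncomputable instance instWMod : Module UU W := restrictModule

lemma W_smul (u : UU) (v : VV) : (u • (show W from v) : W) = show W from (Δ u * v) := rfl

/-- Type synonym for `ℂ` carrying the `UU`-module structure via `eps`. -/
noncomputable def Ceps : Type := ℂ

noncomputable instance : AddCommGroup Ceps := inferInstanceAs (AddCommGroup ℂ)

noncomputable instance instCMod : Module UU Ceps := Module.compHom ℂ eps.toRingHom

noncomputable abbrev II : Ideal UU := Ideal.span {X 0, X 1, X 2}

noncomputable def B : II →ₗ[UU] (W →ₗ[UU] Ceps) where
  toFun x :=
    { toFun := fun v => show Ceps from lamd 2 (x : UU) * mu (show VV from v)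
      map_add' := fun v w => show (lamd 2 (x:UU) * mu (_ + _) : ℂ) = _ from
        (congrArg (lamd 2 (x:UU) * ·) (map_add mu (v:VV) (w:VV))).trans (mul_add _ _ _)
      map_smul' := fun u v => show (lamd 2 (x:UU) * mu (Δ u * _) : ℂ)
          = eps u * (lamd 2 (x:UU) * mu _) from
        (congrArg (lamd 2 (x:UU) * ·) (mu_delta_mul u (v:VV))).trans (mul_left_comm _ _ _) }
  map_add' x y := LinearMap.ext fun v =>
    show (lamd 2 ((x:UU) + (y:UU)) * mu (show VV from v) : ℂ)
        = lamd 2 (x:UU) * mu (show VV from v) + lamd 2 (y:UU) * mu (show VV from v) by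
      rw [map_add]; ring
  map_smul' u x := LinearMap.ext fun v =>
    show (lamd 2 (u * (x : UU)) * mu _ : ℂ) = eps u * (lamd 2 (x:UU) * mu _) by
      rw [lam_mul u x.2]; ring

theorem tensor_square_not_flat_not_projective :
    ¬ @Module.Flat UU (UU ⊗[ℂ] UU) _ _ restrictModule ∧
      ¬ @Module.Projective UU _ (UU ⊗[ℂ] UU) _ restrictModule := by
  have hflat : ¬ Module.Flat UU W := by
    intro hF
    have h0 : (X 0 : UU) ∈ II := Ideal.subset_span (by simp)
    have h1 : (X 1 : UU) ∈ II := Ideal.subset_span (by simp)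
    have h2 : (X 2 : UU) ∈ II := Ideal.subset_span (by simp)
    have hFG : II.FG := Submodule.fg_span (Set.toFinite _)
    set t : II ⊗[UU] W :=
      (⟨X 0, h0⟩ : II) ⊗ₜ[UU] (show W from (X 2 : UU) ⊗ₜ[ℂ] (X 1 : UU))
        - (⟨X 1, h1⟩ : II) ⊗ₜ[UU] (show W from (X 2 : UU) ⊗ₜ[ℂ] (X 0 : UU))
        + (⟨X 2, h2⟩ : II) ⊗ₜ[UU] (show W from (X 1 : UU) ⊗ₜ[ℂ] (X 0 : UU)) with ht
    have himg : LinearMap.rTensor W II.subtype t = 0 := by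
      rw [ht]
      simp only [map_add, map_sub, LinearMap.rTensor_tmul, Submodule.coe_subtype]
      apply (TensorProduct.lid UU W).injective
      simp only [map_add, map_sub, lid_tmul, map_zero]
      show (Δ (X 0) * ((X 2 : UU) ⊗ₜ[ℂ] (X 1 : UU))
          - Δ (X 1) * ((X 2 : UU) ⊗ₜ[ℂ] (X 0 : UU))
          + Δ (X 2) * ((X 1 : UU) ⊗ₜ[ℂ] (X 0 : UU)) : VV) = 0
      rw [Δ_X0, Δ_X1, Δ_X2]
      simp only [Algebra.TensorProduct.tmul_mul_tmul, add_mul]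
      rw [mul_comm (X 1 : UU) (X 0 : UU), mul_comm (X 2 : UU) (X 1 : UU)]
      abel
    have hφt : TensorProduct.lift B t = show Ceps from (1 : ℂ) := by
      rw [ht, map_add, map_sub, lift.tmul, lift.tmul, lift.tmul]
      show (lamd 2 (X 0) * mu ((X 2 : UU) ⊗ₜ[ℂ] (X 1 : UU))
          - lamd 2 (X 1) * mu ((X 2 : UU) ⊗ₜ[ℂ] (X 0 : UU))
          + lamd 2 (X 2) * mu ((X 1 : UU) ⊗ₜ[ℂ] (X 0 : UU)) : ℂ) = 1
      simp [lamd_X, mu_tmul]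
    have htne : t ≠ 0 := by
      intro h
      rw [h, map_zero] at hφt
      exact one_ne_zero (show (0 : ℂ) = 1 from hφt).symm
    exact htne ((Module.Flat.iff_rTensor_injective (R := UU) (M := W)).mp hF hFG
      (by rw [himg, map_zero]))
  constructor
  · exact fun hF => hflat (show Module.Flat UU W from hF)
  · intro hP
    haveI : Module.Projective UU W := hP
    exact hflat (Module.Flat.of_projective (R := UU) (M := W))
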